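/- There exists a pair of set-system hypergraphs G and H such that there is a hypergraph homomorphism from G to H, but there is no graph homomorphism from the intersection graph L(G) to L(H). Consequently, no functor M from the category of set-system hypergraphs to the category of simple graphs satisfies M(G) = L(G) on objects. -/

import Mathlib

/-- A set-system hypergraph: edge set, vertex set, and endpoint assignment. -/
structure SSHyp : Type 1 where
  E : Type
  V : Type
  eps : E → Set V

/-- A traditional set-system hypergraph homomorphism. -/
structure TradHom (G H : SSHyp) where
  fe : G.E → H.E
  fv : G.V → H.V
  comm : ∀ e, H.eps (fe e) = fv '' G.eps e

def TradHom.idH (G : SSHyp) : TradHom G G :=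
  ⟨id, id, fun e => (Set.image_id _).symm⟩

def TradHom.comp {G H K : SSHyp} (φ : TradHom G H) (ψ : TradHom H K) : TradHom G K :=
  ⟨ψ.fe ∘ φ.fe, ψ.fv ∘ φ.fv, fun e => by
    rw [Function.comp_apply, ψ.comm, φ.comm, Set.image_comp]⟩

/-- A set system: vertex set with a family of subsets as edges. -/
structure SetSys : Type 1 where
  V : Type
  edges : Set (Set V)

/-- A set-system (graph) homomorphism: vertex map sending edges to edges. -/
def IsSSHom (G H : SetSys) (f : G.V → H.V) : Prop :=
  ∀ A ∈ G.edges, f '' A ∈ H.edges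

/-- The intersection graph L(G): vertices are edges of `G`, with `{e,f}` an edge for
distinct `e, f` whose endpoint sets overlap. -/
def interGraph (G : SSHyp) : SetSys :=
  ⟨G.E, {A | ∃ e f, e ≠ f ∧ A = {e, f} ∧ (G.eps e ∩ G.eps f).Nonempty}⟩

/-- There are set-system hypergraphs `G`, `H` with a homomorphism `G → H` but no graph
homomorphism `L(G) → L(H)`; consequently no functor `M : H → Gra` satisfies
`M(G) = L(G)` on objects. -/

def Gex : SSHyp := ⟨Bool, Unit, fun _ => Set.univ⟩
def Hex : SSHyp := ⟨Unit, Unit, fun _ => Set.univ⟩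

lemma key : Nonempty (TradHom Gex Hex) ∧
    ¬ ∃ f : (interGraph Gex).V → (interGraph Hex).V,
      IsSSHom (interGraph Gex) (interGraph Hex) f := by
  constructor
  · exact ⟨⟨fun _ => (), id, fun e => by simp [Gex, Hex]⟩⟩
  · rintro ⟨f, hf⟩
    have h : ({false, true} : Set Bool) ∈ (interGraph Gex).edges :=
      ⟨false, true, Bool.false_ne_true, rfl, ⟨(), Set.mem_univ _, Set.mem_univ _⟩⟩
    obtain ⟨e, f', hef, -, -⟩ := hf _ h
    exact hef (Subsingleton.elim (α := Unit) e f')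

theorem intersection_graph_not_functorial :
    (∃ G H : SSHyp, Nonempty (TradHom G H) ∧
      ¬ ∃ f : (interGraph G).V → (interGraph H).V, IsSSHom (interGraph G) (interGraph H) f) ∧
    ¬ ∃ M : ∀ G H : SSHyp, TradHom G H →
        {f : (interGraph G).V → (interGraph H).V // IsSSHom (interGraph G) (interGraph H) f},
      (∀ G : SSHyp, (M G G (TradHom.idH G)).val = id) ∧
      (∀ (G H K : SSHyp) (φ : TradHom G H) (ψ : TradHom H K),
        (M G K (φ.comp ψ)).val = (M H K ψ).val ∘ (M G H φ).val) := by
  refine ⟨⟨Gex, Hex, key⟩, ?_⟩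
  rintro ⟨M, -, -⟩
  obtain ⟨⟨φ⟩, hno⟩ := key
  exact hno ⟨(M Gex Hex φ).val, (M Gex Hex φ).property⟩
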